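/- Let $K$ be a perfect field, $P = K[x_1,\dots,x_n]$, $I$ a zero-dimensional ideal, and for each $i$ let $f_i \in K[x_i]$ generate $I \cap K[x_i]$, with $g_i$ the squarefree part of $f_i$. Then $\sqrt{I} = I + \langle g_1, \dots, g_n \rangle$. -/

import Mathlib

open Polynomial MvPolynomial Ideal

set_option maxHeartbeats 1000000 in
theorem stmt9 {K : Type*} [Field K] [PerfectField K] {n : ℕ}
    (I : Ideal (MvPolynomial (Fin n) K))
    [FiniteDimensional K (MvPolynomial (Fin n) K ⧸ I)]
    (f g : Fin n → Polynomial K)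
    (hf : ∀ i, Ideal.comap (Polynomial.aeval (MvPolynomial.X i :
        MvPolynomial (Fin n) K)).toRingHom I = Ideal.span {f i})
    (hg : ∀ i, Ideal.span {g i} = (Ideal.span {f i}).radical) :
    I.radical = I ⊔ Ideal.span
      (Set.range fun i => Polynomial.aeval (MvPolynomial.X i : MvPolynomial (Fin n) K) (g i)) := by
  classical
  set P := MvPolynomial (Fin n) K
  set J : Ideal P := I ⊔ Ideal.span
      (Set.range fun i => Polynomial.aeval (MvPolynomial.X i : P) (g i)) with hJ
  -- f i ≠ 0
  have hfne : ∀ i, f i ≠ 0 := by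
    intro i hfi
    have hcomap : Ideal.comap (Polynomial.aeval (R := K) (MvPolynomial.X i : P)).toRingHom I = ⊥ := by
      rw [hf i, hfi]
      simp
    have hker : RingHom.ker ((Ideal.Quotient.mkₐ K I).comp
        (Polynomial.aeval (MvPolynomial.X i : P)) : Polynomial K →ₐ[K] P ⧸ I) = ⊥ := by
      rw [← AlgHom.comap_ker]
      have : RingHom.ker (Ideal.Quotient.mkₐ K I) = I := Ideal.mk_ker
      rw [this]
      exact hcomap
    have hinj : Function.Injective (((Ideal.Quotient.mkₐ K I).comp
        (Polynomial.aeval (MvPolynomial.X i : P))) : Polynomial K →ₐ[K] P ⧸ I) := by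
      rwa [← RingHom.injective_iff_ker_eq_bot] at hker
    have : Module.Finite K (Polynomial K) :=
      Module.Finite.of_injective ((Ideal.Quotient.mkₐ K I).comp
        (Polynomial.aeval (MvPolynomial.X i : P))).toLinearMap hinj
    exact Polynomial.not_finite this
  -- g i ≠ 0 and squarefree, hence separable
  have hgne : ∀ i, g i ≠ 0 := by
    intro i hgi
    have : f i ∈ (Ideal.span {f i}).radical := Ideal.le_radical (Ideal.mem_span_singleton_self _)
    rw [← hg i, hgi, Set.singleton_zero, Ideal.span_zero, Ideal.mem_bot] at this
    exact hfne i this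
  have hsep : ∀ i, (g i).Separable := by
    intro i
    rw [PerfectField.separable_iff_squarefree]
    refine IsRadical.squarefree (hgne i) ?_
    rw [isRadical_iff_span_singleton, hg i]
    exact Ideal.radical_isRadical _
  -- the quotient by J
  set A := P ⧸ J
  set x : Fin n → A := fun i => Ideal.Quotient.mk J (MvPolynomial.X i) with hx
  have hgen : Algebra.adjoin K (Set.range x) = ⊤ := by
    have h1 : (Algebra.adjoin K (Set.range (MvPolynomial.X : Fin n → P))).map
        (Ideal.Quotient.mkₐ K J) = Algebra.adjoin K
          ((Ideal.Quotient.mkₐ K J) '' Set.range (MvPolynomial.X : Fin n → P)) :=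
      AlgHom.map_adjoin _ _
    rw [MvPolynomial.adjoin_range_X, Algebra.map_top,
      (AlgHom.range_eq_top _).2 (Ideal.Quotient.mkₐ_surjective K J)] at h1
    have h2 : Set.range x = ⇑(Ideal.Quotient.mkₐ K J) '' Set.range (MvPolynomial.X : Fin n → P) := by
      rw [← Set.range_comp]; rfl
    rw [h2]; exact h1.symm
  have hgx : ∀ i, Polynomial.aeval (x i) (g i) = 0 := by
    intro i
    have hmem : Polynomial.aeval (MvPolynomial.X i : P) (g i) ∈ J :=
      Ideal.mem_sup_right (Ideal.subset_span ⟨i, rfl⟩)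
    have h := Polynomial.aeval_algHom_apply (Ideal.Quotient.mkₐ K J) (MvPolynomial.X i) (g i)
    show Polynomial.aeval ((Ideal.Quotient.mkₐ K J) (MvPolynomial.X i)) (g i) = 0
    rw [h, Ideal.Quotient.mkₐ_eq_mk, Ideal.Quotient.eq_zero_iff_mem]
    exact hmem
  have hunit : ∀ i, IsUnit (Polynomial.aeval (x i) (Polynomial.derivative (g i))) := by
    intro i
    obtain ⟨a, b, hab⟩ := hsep i
    refine IsUnit.of_mul_eq_one (Polynomial.aeval (x i) b) ?_
    have := congrArg (Polynomial.aeval (x i)) hab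
    rw [_root_.map_add, _root_.map_mul, _root_.map_mul, _root_.map_one, hgx i, mul_zero, zero_add] at this
    rw [mul_comm]; exact this
  -- every K-derivation of A is zero
  have hderiv : ∀ (M : Type _) [AddCommGroup M] [Module A M] [Module K M]
      [IsScalarTower K A M] (D : Derivation K A M), D = 0 := by
    intro M _ _ _ _ D
    refine Derivation.ext_of_adjoin_eq_top (R := K) (Set.range x) hgen ?_
    rintro _ ⟨i, rfl⟩
    have h0 : Polynomial.aeval (x i) (Polynomial.derivative (g i)) • D (x i) = 0 := by
      rw [← Derivation.map_aeval, hgx i, map_zero]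
    have hu := hunit i
    have : D (x i) = (↑hu.unit⁻¹ : A) • (Polynomial.aeval (x i)
        (Polynomial.derivative (g i)) • D (x i)) := by
      rw [← mul_smul, IsUnit.val_inv_mul, one_smul]
    rw [this, h0, smul_zero]
    rfl
  -- Ω[A/K] is trivial
  have hsub : Subsingleton (Ω[A⁄K]) := by
    have hD := hderiv (Ω[A⁄K]) (KaehlerDifferential.D K A)
    rw [subsingleton_iff_forall_eq 0]
    intro y
    have hy : y ∈ (⊤ : Submodule A (Ω[A⁄K])) := trivial
    rw [← KaehlerDifferential.span_range_derivation, hD] at hy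
    have : Set.range ⇑(0 : Derivation K A (Ω[A⁄K])) ⊆ {0} := by
      rintro _ ⟨z, rfl⟩; rfl
    have h3 := Submodule.span_mono (R := A) this hy
    simpa using h3
  haveI : Algebra.FormallyUnramified K A := ⟨hsub⟩
  haveI : Algebra.FiniteType K A :=
    Algebra.FiniteType.of_surjective
      (Ideal.Quotient.mkₐ K J) (Ideal.Quotient.mkₐ_surjective K J)
  haveI : IsReduced A := Algebra.FormallyUnramified.isReduced_of_field K A
  -- J is radical
  have hJrad : J.IsRadical := by
    have := (RingHom.ker_isRadical_iff_reduced_of_surjective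
      (Ideal.Quotient.mk_surjective (I := J))).2 inferInstance
    rwa [Ideal.mk_ker] at this
  -- conclude
  apply le_antisymm
  · have hIJ : I ≤ J := le_sup_left
    calc I.radical ≤ J.radical := Ideal.radical_mono hIJ
      _ = J := hJrad.radical
  · refine sup_le Ideal.le_radical (Ideal.span_le.2 ?_)
    rintro _ ⟨i, rfl⟩
    have : g i ∈ (Ideal.span {f i}).radical := by
      rw [← hg i]; exact Ideal.mem_span_singleton_self _
    rw [← hf i, ← Ideal.comap_radical] at this
    exact this
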